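/- Let m be a positive integer and ε ∈ {+1,−1}. Then each of the functions F, G : T³ → ℝ given by F(x₁,x₂,x₃) = sin(mx₁)·sin(mx₂) + ε·cos(mx₁)·sin(mx₃) and G(x₁,x₂,x₃) = cos(mx₁)·cos(mx₂) + ε·cos(mx₃)·sin(mx₁) has exactly two nodal domains. -/

import Mathlib

noncomputable section

/-- `cos (m x)` is `2π`-periodic. -/
lemma cos_mul_periodic (m : ℕ) :
    Function.Periodic (fun x : ℝ => Real.cos (m * x)) (2 * Real.pi) := by
  intro x
  have h : (m : ℝ) * (x + 2 * Real.pi) = m * x + (m : ℤ) * (2 * Real.pi) := by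
    push_cast; ring
  simp only [h, Real.cos_add_int_mul_two_pi]

/-- `sin (m x)` is `2π`-periodic. -/
lemma sin_mul_periodic (m : ℕ) :
    Function.Periodic (fun x : ℝ => Real.sin (m * x)) (2 * Real.pi) := by
  intro x
  have h : (m : ℝ) * (x + 2 * Real.pi) = m * x + (m : ℤ) * (2 * Real.pi) := by
    push_cast; ring
  simp only [h, Real.sin_add_int_mul_two_pi]

/-- The function `cos (m ·)` on the circle `ℝ/2πℤ`. -/
def cosT (m : ℕ) : AddCircle (2 * Real.pi) → ℝ := (cos_mul_periodic m).lift

/-- The function `sin (m ·)` on the circle `ℝ/2πℤ`. -/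
def sinT (m : ℕ) : AddCircle (2 * Real.pi) → ℝ := (sin_mul_periodic m).lift

/-- `f₁ = cos`, `f₀ = sin` (with frequency `m`) on the circle `ℝ/2πℤ`. -/
def fT (j : Fin 2) (m : ℕ) : AddCircle (2 * Real.pi) → ℝ :=
  if j = 1 then cosT m else sinT m

/-- The flat 3-torus `T³ = (ℝ/2πℤ)³`. -/
abbrev T3 := AddCircle (2 * Real.pi) × AddCircle (2 * Real.pi) × AddCircle (2 * Real.pi)


open Real Set

def f3 (x : ℝ × ℝ × ℝ) : ℝ := sin x.1 * sin x.2.1 + cos x.1 * sin x.2.2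

def PosS : Set (ℝ × ℝ × ℝ) := {x | 0 < f3 x}

lemma f3_def (a b c : ℝ) : f3 (a, b, c) = sin a * sin b + cos a * sin c := rfl

lemma lin_mem_uIcc {a b t : ℝ} (h0 : 0 ≤ t) (h1 : t ≤ 1) :
    a + t * (b - a) ∈ uIcc a b := by
  rcases le_total a b with h | h
  · rw [uIcc_of_le h]; constructor <;> nlinarith
  · rw [uIcc_of_ge h]; constructor <;> nlinarith

lemma joinedIn_box {P : Set (ℝ × ℝ × ℝ)} (x y : ℝ × ℝ × ℝ)
    (h : ∀ u ∈ uIcc x.1 y.1, ∀ v ∈ uIcc x.2.1 y.2.1, ∀ w ∈ uIcc x.2.2 y.2.2, (u, v, w) ∈ P) :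
    JoinedIn P x y := by
  apply JoinedIn.ofLine
    (f := fun t => (x.1 + t * (y.1 - x.1), x.2.1 + t * (y.2.1 - x.2.1), x.2.2 + t * (y.2.2 - x.2.2)))
  · fun_prop
  · simp
  · simp
  · rintro _ ⟨t, ht, rfl⟩
    exact h _ (lin_mem_uIcc ht.1 ht.2) _ (lin_mem_uIcc ht.1 ht.2) _ (lin_mem_uIcc ht.1 ht.2)

lemma sin_shift (x : ℝ) (k : ℤ) : sin (x + 2 * π * k) = sin x := by
  rw [show x + 2 * π * k = x + k * (2 * π) by ring, Real.sin_add_int_mul_two_pi]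

lemma cos_shift (x : ℝ) (k : ℤ) : cos (x + 2 * π * k) = cos x := by
  rw [show x + 2 * π * k = x + k * (2 * π) by ring, Real.cos_add_int_mul_two_pi]

lemma sin_eval_half (k : ℤ) : sin (2 * π * k + π / 2) = 1 := by
  rw [show 2 * π * (k:ℝ) + π/2 = π/2 + 2 * π * k by ring, sin_shift, Real.sin_pi_div_two]

lemma sin_eval_neg_half (k : ℤ) : sin (2 * π * k - π / 2) = -1 := by
  rw [show 2 * π * (k:ℝ) - π/2 = -(π/2) + 2 * π * k by ring, sin_shift, Real.sin_neg,
    Real.sin_pi_div_two]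

lemma sin_eval_zero (k : ℤ) : sin (2 * π * k) = 0 := by
  rw [show 2 * π * (k:ℝ) = 0 + 2 * π * k by ring, sin_shift, Real.sin_zero]

lemma cos_eval_zero (k : ℤ) : cos (2 * π * k) = 1 := by
  rw [show 2 * π * (k:ℝ) = 0 + 2 * π * k by ring, cos_shift, Real.cos_zero]

lemma cos_eval_half (k : ℤ) : cos (2 * π * k + π / 2) = 0 := by
  rw [show 2 * π * (k:ℝ) + π/2 = π/2 + 2 * π * k by ring, cos_shift, Real.cos_pi_div_two]

lemma cos_eval_neg_half (k : ℤ) : cos (2 * π * k - π / 2) = 0 := by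
  rw [show 2 * π * (k:ℝ) - π/2 = -(π/2) + 2 * π * k by ring, cos_shift, Real.cos_neg,
    Real.cos_pi_div_two]

lemma exists_k (a : ℝ) : ∃ k : ℤ, 2 * π * k ≤ a ∧ a < 2 * π * k + 2 * π := by
  refine ⟨⌊a / (2 * π)⌋, ?_, ?_⟩
  · have h := Int.floor_le (a / (2 * π))
    have h2 : (0:ℝ) < 2 * π := by positivity
    calc 2 * π * ⌊a / (2*π)⌋ ≤ 2 * π * (a / (2 * π)) := by
          exact mul_le_mul_of_nonneg_left h (by positivity)
      _ = a := by field_simp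
  · have h := Int.lt_floor_add_one (a / (2 * π))
    have h2 : (0:ℝ) < 2 * π := by positivity
    have := (div_lt_iff₀ h2).1 h
    nlinarith

lemma sin_as_cos (x : ℝ) (k : ℤ) : sin x = cos (x - 2 * π * k - π / 2) := by
  rw [show x - 2 * π * k - π/2 = (x - π/2) + 2 * π * ((-k : ℤ) : ℝ) by push_cast; ring, cos_shift,
    ← Real.cos_neg, neg_sub, Real.cos_pi_div_two_sub]

lemma exists_peak (b : ℝ) : ∃ l : ℤ, ∀ t ∈ uIcc b (2 * π * l + π / 2), sin b ≤ sin t := by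
  obtain ⟨k, hk1, hk2⟩ := exists_k (b + π / 2)
  refine ⟨k, ?_⟩
  intro t ht
  have hb1 : 2 * π * k - π/2 ≤ b := by linarith
  have hb2 : b < 2 * π * k + 3 * π / 2 := by linarith
  rcases le_total b (2 * π * k + π / 2) with h | h
  · rw [uIcc_of_le h] at ht
    have h1 : sin b = sin ((b - 2*π*k) + 2*π*k) := by ring_nf
    have h2 : sin t = sin ((t - 2*π*k) + 2*π*k) := by ring_nf
    rw [h1, h2, sin_shift, sin_shift]
    apply Real.strictMonoOn_sin.monotoneOn
    · constructor <;> [linarith; linarith]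
    · exact ⟨by linarith [ht.1], by linarith [ht.2]⟩
    · linarith [ht.1]
  · rw [uIcc_of_ge h] at ht
    rw [sin_as_cos b k, sin_as_cos t k]
    apply Real.strictAntiOn_cos.antitoneOn
    · constructor
      · linarith [ht.1]
      · linarith [ht.2]
    · constructor
      · linarith [ht.1, ht.2]
      · linarith
    · linarith [ht.2]

lemma neg_mem_uIcc {a b t : ℝ} (h : t ∈ uIcc a b) : -t ∈ uIcc (-a) (-b) := by
  rw [Set.mem_uIcc] at h ⊢
  rcases h with h | h
  · right; constructor <;> linarith
  · left; constructor <;> linarith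

/-- Adjust a coordinate so that `s * sin` hits `|s|`, without ever decreasing `s * sin`. -/
lemma sin_adjust (s b : ℝ) :
    ∃ (b' : ℝ) (l : ℤ) (σ : ℝ), (σ = 1 ∨ σ = -1) ∧ b' = 2 * π * l + σ * (π / 2) ∧
      sin b' = σ ∧ s * σ = |s| ∧ ∀ t ∈ uIcc b b', s * sin b ≤ s * sin t := by
  rcases le_or_gt 0 s with hs | hs
  · obtain ⟨l, hl⟩ := exists_peak b
    refine ⟨2 * π * l + π / 2, l, 1, Or.inl rfl, by ring, ?_, ?_, ?_⟩
    · simpa using sin_eval_half l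
    · rw [mul_one, abs_of_nonneg hs]
    · exact fun t ht => mul_le_mul_of_nonneg_left (hl t ht) hs
  · obtain ⟨l, hl⟩ := exists_peak (-b)
    refine ⟨-(2 * π * l + π / 2), -l, -1, Or.inr rfl, by push_cast; ring, ?_, ?_, ?_⟩
    · rw [Real.sin_neg, sin_eval_half]
    · rw [abs_of_neg hs]; ring
    · intro t ht
      have h2 : -t ∈ uIcc (-b) (2 * π * l + π / 2) := by
        have := neg_mem_uIcc ht; rwa [neg_neg] at this
      have := hl (-t) h2
      rw [Real.sin_neg, Real.sin_neg] at this
      have h3 : sin t ≤ sin b := by linarith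
      exact mul_le_mul_of_nonpos_left h3 hs.le

lemma arc_move {σ₂ σ₃ : ℝ} (h2 : σ₂ = 1 ∨ σ₂ = -1) (h3 : σ₃ = 1 ∨ σ₃ = -1)
    {b c : ℝ} (hb : sin b = σ₂) (hc : sin c = σ₃) {lo hi a a' : ℝ}
    (ha : a ∈ Icc lo hi) (ha' : a' ∈ Icc lo hi)
    (hsgn : ∀ τ ∈ Icc lo hi, 0 ≤ σ₂ * sin τ ∧ 0 ≤ σ₃ * cos τ) :
    JoinedIn PosS (a, b, c) (a', b, c) := by
  apply joinedIn_box
  intro u hu v hv w hw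
  simp only [uIcc_self, mem_singleton_iff] at hv hw
  subst hv; subst hw
  have hu' : u ∈ Icc lo hi := uIcc_subset_Icc ha ha' hu
  obtain ⟨l1, l2⟩ := hsgn u hu'
  show 0 < f3 _
  have hpyth := Real.sin_sq_add_cos_sq u
  rcases h2 with h2 | h2 <;> rcases h3 with h3 | h3 <;>
    subst h2 <;> subst h3 <;> rw [f3_def, hb, hc] <;>
    nlinarith [mul_nonneg l1 l2]

lemma freeC {a b : ℝ} (hA : cos a = 0) (hAB : sin a * sin b = 1) (c c' : ℝ) :
    JoinedIn PosS (a, b, c) (a, b, c') := by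
  apply joinedIn_box
  intro u hu v hv w hw
  simp only [uIcc_self, mem_singleton_iff] at hu hv
  subst hu; subst hv
  show 0 < f3 _
  rw [f3_def, hA, hAB]; norm_num

lemma freeB {a c : ℝ} (hA : sin a = 0) (hAC : cos a * sin c = 1) (b b' : ℝ) :
    JoinedIn PosS (a, b, c) (a, b', c) := by
  apply joinedIn_box
  intro u hu v hv w hw
  simp only [uIcc_self, mem_singleton_iff] at hu hw
  subst hu; subst hw
  show 0 < f3 _
  rw [f3_def, hA, hAC]; norm_num

lemma diag {x y : ℝ × ℝ × ℝ} (t0 t1 : ℝ) (hx : x = (t0, t0, t0 + π / 2))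
    (hy : y = (t1, t1, t1 + π / 2)) : JoinedIn PosS x y := by
  subst hx; subst hy
  apply JoinedIn.ofLine (f := fun t => (t0 + t * (t1 - t0), t0 + t * (t1 - t0),
    t0 + t * (t1 - t0) + π / 2))
  · fun_prop
  · simp
  · simp
  · rintro _ ⟨t, ht, rfl⟩
    show 0 < f3 _
    rw [f3_def, Real.sin_add_pi_div_two]
    nlinarith [Real.sin_sq_add_cos_sq (t0 + t * (t1 - t0))]

lemma sin_eq_shift (τ : ℝ) (k : ℤ) : sin τ = sin (τ - 2 * π * k) := by
  conv_lhs => rw [show τ = (τ - 2 * π * k) + 2 * π * k by ring]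
  rw [sin_shift]

lemma cos_eq_shift (τ : ℝ) (k : ℤ) : cos τ = cos (τ - 2 * π * k) := by
  conv_lhs => rw [show τ = (τ - 2 * π * k) + 2 * π * k by ring]
  rw [cos_shift]

lemma sgn_Q1 (k : ℤ) : ∀ τ ∈ Icc (2*π*k) (2*π*k + π/2), 0 ≤ sin τ ∧ 0 ≤ cos τ := by
  intro τ hτ
  rw [sin_eq_shift τ k, cos_eq_shift τ k]
  have pi_pos := Real.pi_pos
  constructor
  · exact Real.sin_nonneg_of_nonneg_of_le_pi (by linarith [hτ.1]) (by linarith [hτ.2])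
  · exact Real.cos_nonneg_of_mem_Icc ⟨by linarith [hτ.1], by linarith [hτ.2]⟩

lemma sgn_Q2 (k : ℤ) : ∀ τ ∈ Icc (2*π*k + π/2) (2*π*k + π), 0 ≤ sin τ ∧ cos τ ≤ 0 := by
  intro τ hτ
  rw [sin_eq_shift τ k, cos_eq_shift τ k]
  have pi_pos := Real.pi_pos
  constructor
  · exact Real.sin_nonneg_of_nonneg_of_le_pi (by linarith [hτ.1]) (by linarith [hτ.2])
  · exact Real.cos_nonpos_of_pi_div_two_le_of_le (by linarith [hτ.1]) (by linarith [hτ.2])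

lemma sgn_Q3 (k : ℤ) : ∀ τ ∈ Icc (2*π*k + π) (2*π*k + 3*π/2), sin τ ≤ 0 ∧ cos τ ≤ 0 := by
  intro τ hτ
  rw [sin_eq_shift τ k, cos_eq_shift τ k]
  have pi_pos := Real.pi_pos
  set ρ := τ - 2*π*k with hρ
  constructor
  · have h1 : sin (ρ - π) = -sin ρ := Real.sin_sub_pi ρ
    have h2 : 0 ≤ sin (ρ - π) :=
      Real.sin_nonneg_of_nonneg_of_le_pi (by simp only [hρ]; linarith [hτ.1])
        (by simp only [hρ]; linarith [hτ.2])
    linarith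
  · exact Real.cos_nonpos_of_pi_div_two_le_of_le (by simp only [hρ]; linarith [hτ.1])
      (by simp only [hρ]; linarith [hτ.2])

lemma sgn_Qm1 (k : ℤ) : ∀ τ ∈ Icc (2*π*k - π/2) (2*π*k), sin τ ≤ 0 ∧ 0 ≤ cos τ := by
  intro τ hτ
  rw [sin_eq_shift τ k, cos_eq_shift τ k]
  have pi_pos := Real.pi_pos
  set ρ := τ - 2*π*k with hρ
  constructor
  · have h1 : 0 ≤ sin (-ρ) :=
      Real.sin_nonneg_of_nonneg_of_le_pi (by simp only [hρ]; linarith [hτ.2])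
        (by simp only [hρ]; linarith [hτ.1])
    rw [Real.sin_neg] at h1; linarith
  · exact Real.cos_nonneg_of_mem_Icc ⟨by simp only [hρ]; linarith [hτ.1],
      by simp only [hρ]; linarith [hτ.2]⟩

lemma locate_pp {α : ℝ} (h0 : -(π/2) ≤ α) (h2 : α < 3*π/2)
    (hs : 0 ≤ sin α) (hc : 0 ≤ cos α) : 0 ≤ α ∧ α ≤ π/2 := by
  have pi_pos := Real.pi_pos
  constructor
  · by_contra h
    push_neg at h
    have h1 : 0 < sin (-α) := Real.sin_pos_of_pos_of_lt_pi (by linarith) (by linarith)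
    rw [Real.sin_neg] at h1; linarith
  · by_contra h
    push_neg at h
    have := Real.cos_neg_of_pi_div_two_lt_of_lt h (by linarith)
    linarith

lemma locate_pm {α : ℝ} (h0 : -(π/2) ≤ α) (h2 : α < 3*π/2)
    (hs : 0 ≤ sin α) (hc : cos α ≤ 0) : π/2 ≤ α ∧ α ≤ π := by
  have pi_pos := Real.pi_pos
  have hlow : -(π/2) < α := by
    rcases eq_or_lt_of_le h0 with h | h
    · exfalso
      have hval : sin (-(π/2)) = -1 := by rw [Real.sin_neg, Real.sin_pi_div_two]
      rw [← h, hval] at hs; linarith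
    · exact h
  constructor
  · by_contra h
    push_neg at h
    have := Real.cos_pos_of_mem_Ioo ⟨hlow, h⟩
    linarith
  · by_contra h
    push_neg at h
    have h1 : 0 < sin (α - π) := Real.sin_pos_of_pos_of_lt_pi (by linarith) (by linarith)
    rw [Real.sin_sub_pi] at h1; linarith

lemma locate_mp {α : ℝ} (h0 : -(π/2) ≤ α) (h2 : α < 3*π/2)
    (hs : sin α ≤ 0) (hc : 0 ≤ cos α) : -(π/2) ≤ α ∧ α ≤ 0 := by
  have pi_pos := Real.pi_pos
  refine ⟨h0, ?_⟩
  by_contra h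
  push_neg at h
  rcases lt_or_ge α π with h1 | h1
  · have := Real.sin_pos_of_pos_of_lt_pi h h1
    linarith
  · have := Real.cos_neg_of_pi_div_two_lt_of_lt (show π/2 < α by linarith) (by linarith)
    linarith

lemma locate_mm {α : ℝ} (h0 : -(π/2) ≤ α) (h2 : α < 3*π/2)
    (hs : sin α ≤ 0) (hc : cos α ≤ 0) : (π ≤ α ∧ α ≤ 3*π/2) ∨ α = -(π/2) := by
  have pi_pos := Real.pi_pos
  rcases eq_or_lt_of_le h0 with h | h
  · exact Or.inr h.symm
  · left
    refine ⟨?_, h2.le⟩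
    by_contra hh
    push_neg at hh
    rcases le_or_gt α 0 with h1 | h1
    · have := Real.cos_pos_of_mem_Ioo ⟨h, by linarith⟩
      linarith
    · have := Real.sin_pos_of_pos_of_lt_pi h1 hh
      linarith

lemma conn_X {a b : ℝ} (k l : ℤ) (ha : a = 2*π*k + π/2) (hb : b = 2*π*l + π/2) (c : ℝ) :
    JoinedIn PosS (a, b, c) (π/2, π/2, π/2) := by
  subst ha; subst hb
  have pi_pos := Real.pi_pos
  have sgn1 : ∀ τ ∈ Icc (2*π*(k:ℝ)) (2*π*k + π/2), 0 ≤ (1:ℝ) * sin τ ∧ 0 ≤ (1:ℝ) * cos τ := by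
    intro τ hτ
    obtain ⟨h1, h2⟩ := sgn_Q1 k τ hτ
    constructor <;> linarith
  have t1 : JoinedIn PosS (2*π*(k:ℝ) + π/2, 2*π*(l:ℝ) + π/2, c)
      (2*π*(k:ℝ) + π/2, 2*π*(l:ℝ) + π/2, π/2) :=
    freeC (cos_eval_half k) (by rw [sin_eval_half k, sin_eval_half l]; norm_num) _ _
  have t2 : JoinedIn PosS (2*π*(k:ℝ) + π/2, 2*π*(l:ℝ) + π/2, π/2)
      (2*π*(k:ℝ), 2*π*(l:ℝ) + π/2, π/2) :=
    arc_move (Or.inl rfl) (Or.inl rfl) (sin_eval_half l) Real.sin_pi_div_two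
      ⟨by linarith, le_refl _⟩ ⟨le_refl _, by linarith⟩ sgn1
  have t3 : JoinedIn PosS (2*π*(k:ℝ), 2*π*(l:ℝ) + π/2, π/2)
      (2*π*(k:ℝ), 2*π*(k:ℝ) + π/2, π/2) :=
    freeB (sin_eval_zero k) (by rw [cos_eval_zero k, Real.sin_pi_div_two]; norm_num) _ _
  have t4 : JoinedIn PosS (2*π*(k:ℝ), 2*π*(k:ℝ) + π/2, π/2)
      (2*π*(k:ℝ) + π/2, 2*π*(k:ℝ) + π/2, π/2) :=
    arc_move (Or.inl rfl) (Or.inl rfl) (sin_eval_half k) Real.sin_pi_div_two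
      ⟨le_refl _, by linarith⟩ ⟨by linarith, le_refl _⟩ sgn1
  have t5 : JoinedIn PosS (2*π*(k:ℝ) + π/2, 2*π*(k:ℝ) + π/2, π/2)
      (2*π*(k:ℝ) + π/2, 2*π*(k:ℝ) + π/2, 2*π*(k:ℝ) + π) :=
    freeC (cos_eval_half k) (by rw [sin_eval_half k]; norm_num) _ _
  have t6 : JoinedIn PosS (2*π*(k:ℝ) + π/2, 2*π*(k:ℝ) + π/2, 2*π*(k:ℝ) + π)
      (π/2, π/2, π) :=
    diag (2*π*(k:ℝ) + π/2) (π/2) (by simp [Prod.ext_iff]; try ring) (by simp [Prod.ext_iff]; try ring)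
  have t7 : JoinedIn PosS ((π/2 : ℝ), (π/2 : ℝ), π) (π/2, π/2, π/2) :=
    freeC Real.cos_pi_div_two (by rw [Real.sin_pi_div_two]; norm_num) _ _
  exact ((((((t1.trans t2).trans t3).trans t4).trans t5).trans t6).trans t7)

lemma conn_Y {a c : ℝ} (k n : ℤ) (ha : a = 2*π*k) (hc : c = 2*π*n + π/2) (b : ℝ) :
    JoinedIn PosS (a, b, c) (π/2, π/2, π/2) := by
  subst ha; subst hc
  have pi_pos := Real.pi_pos
  have t1 : JoinedIn PosS (2*π*(k:ℝ), b, 2*π*(n:ℝ) + π/2)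
      (2*π*(k:ℝ), 2*π*(k:ℝ) + π/2, 2*π*(n:ℝ) + π/2) :=
    freeB (sin_eval_zero k) (by rw [cos_eval_zero k, sin_eval_half n]; norm_num) _ _
  have sgn1 : ∀ τ ∈ Icc (2*π*(k:ℝ)) (2*π*k + π/2), 0 ≤ (1:ℝ) * sin τ ∧ 0 ≤ (1:ℝ) * cos τ := by
    intro τ hτ
    obtain ⟨h1, h2⟩ := sgn_Q1 k τ hτ
    constructor <;> linarith
  have t2 : JoinedIn PosS (2*π*(k:ℝ), 2*π*(k:ℝ) + π/2, 2*π*(n:ℝ) + π/2)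
      (2*π*(k:ℝ) + π/2, 2*π*(k:ℝ) + π/2, 2*π*(n:ℝ) + π/2) :=
    arc_move (Or.inl rfl) (Or.inl rfl) (sin_eval_half k) (sin_eval_half n)
      ⟨le_refl _, by linarith⟩ ⟨by linarith, le_refl _⟩ sgn1
  exact (t1.trans t2).trans (conn_X k k rfl rfl _)

set_option maxHeartbeats 2000000 in
theorem key_joined (x : ℝ × ℝ × ℝ) (hx : x ∈ PosS) :
    JoinedIn PosS x (π/2, π/2, π/2) := by
  obtain ⟨a, b, c⟩ := x
  have pi_pos := Real.pi_pos
  have hx' : 0 < sin a * sin b + cos a * sin c := hx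
  obtain ⟨b', l, σ₂, hσ2, hbform, hbsin, habs2, hmono2⟩ := sin_adjust (sin a) b
  obtain ⟨c', n, σ₃, hσ3, hcform, hcsin, habs3, hmono3⟩ := sin_adjust (cos a) c
  have habs_b : sin a * sin b ≤ |sin a| := by
    calc sin a * sin b ≤ |sin a * sin b| := le_abs_self _
      _ = |sin a| * |sin b| := abs_mul _ _
      _ ≤ |sin a| * 1 := by
          exact mul_le_mul_of_nonneg_left (Real.abs_sin_le_one b) (abs_nonneg _)
      _ = |sin a| := mul_one _
  have m1 : JoinedIn PosS (a, b, c) (a, b', c) := by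
    apply joinedIn_box
    intro u hu v hv w hw
    simp only [uIcc_self, mem_singleton_iff] at hu hw
    subst hu; subst hw
    show 0 < f3 _
    rw [f3_def]
    have := hmono2 v hv
    linarith
  have m2 : JoinedIn PosS (a, b', c) (a, b', c') := by
    apply joinedIn_box
    intro u hu v hv w hw
    simp only [uIcc_self, mem_singleton_iff] at hu hv
    subst hu; subst hv
    show 0 < f3 _
    rw [f3_def, hbsin]
    have h1 := hmono3 w hw
    linarith [habs2, habs_b]
  have m12 := m1.trans m2
  -- now the first coordinate
  obtain ⟨k, hk1, hk2⟩ := exists_k (a + π/2)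
  have hsa : sin a = sin (a - 2*π*k) := sin_eq_shift a k
  have hca : cos a = cos (a - 2*π*k) := cos_eq_shift a k
  have hα0 : -(π/2) ≤ a - 2*π*k := by linarith
  have hα2 : a - 2*π*k < 3*π/2 := by linarith
  rcases hσ2 with h2 | h2 <;> rcases hσ3 with h3 | h3 <;> subst h2 <;> subst h3
  · -- σ₂ = 1, σ₃ = 1
    have hs : 0 ≤ sin a := by rw [mul_one] at habs2; rw [habs2]; exact abs_nonneg _
    have hc : 0 ≤ cos a := by rw [mul_one] at habs3; rw [habs3]; exact abs_nonneg _
    obtain ⟨q1, q2⟩ := locate_pp hα0 hα2 (by rw [← hsa]; exact hs) (by rw [← hca]; exact hc)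
    have m3 : JoinedIn PosS (a, b', c') (2*π*(k:ℝ) + π/2, b', c') :=
      arc_move (lo := 2*π*(k:ℝ)) (hi := 2*π*(k:ℝ) + π/2) (Or.inl rfl) (Or.inl rfl) hbsin hcsin
        ⟨by linarith, by linarith⟩ ⟨by linarith, le_refl _⟩
        (fun τ hτ => by obtain ⟨u1, u2⟩ := sgn_Q1 k τ hτ; constructor <;> linarith)
    exact m12.trans (m3.trans (conn_X k l rfl (by rw [hbform]; ring) _))
  · -- σ₂ = 1, σ₃ = -1
    have hs : 0 ≤ sin a := by rw [mul_one] at habs2; rw [habs2]; exact abs_nonneg _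
    have hc : cos a ≤ 0 := by nlinarith [abs_nonneg (cos a)]
    obtain ⟨q1, q2⟩ := locate_pm hα0 hα2 (by rw [← hsa]; exact hs) (by rw [← hca]; exact hc)
    have m3 : JoinedIn PosS (a, b', c') (2*π*(k:ℝ) + π/2, b', c') :=
      arc_move (lo := 2*π*(k:ℝ) + π/2) (hi := 2*π*(k:ℝ) + π) (Or.inl rfl) (Or.inr rfl) hbsin hcsin
        ⟨by linarith, by linarith⟩ ⟨le_refl _, by linarith⟩
        (fun τ hτ => by obtain ⟨u1, u2⟩ := sgn_Q2 k τ hτ; constructor <;> linarith)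
    exact m12.trans (m3.trans (conn_X k l rfl (by rw [hbform]; ring) _))
  · -- σ₂ = -1, σ₃ = 1
    have hs : sin a ≤ 0 := by nlinarith [abs_nonneg (sin a)]
    have hc : 0 ≤ cos a := by rw [mul_one] at habs3; rw [habs3]; exact abs_nonneg _
    obtain ⟨q1, q2⟩ := locate_mp hα0 hα2 (by rw [← hsa]; exact hs) (by rw [← hca]; exact hc)
    have m3 : JoinedIn PosS (a, b', c') (2*π*(k:ℝ), b', c') :=
      arc_move (lo := 2*π*(k:ℝ) - π/2) (hi := 2*π*(k:ℝ)) (Or.inr rfl) (Or.inl rfl) hbsin hcsin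
        ⟨by linarith, by linarith⟩ ⟨by linarith, le_refl _⟩
        (fun τ hτ => by obtain ⟨u1, u2⟩ := sgn_Qm1 k τ hτ; constructor <;> linarith)
    exact m12.trans (m3.trans (conn_Y k n rfl (by rw [hcform]; ring) _))
  · -- σ₂ = -1, σ₃ = -1
    have hs : sin a ≤ 0 := by nlinarith [abs_nonneg (sin a)]
    have hc : cos a ≤ 0 := by nlinarith [abs_nonneg (cos a)]
    rcases locate_mm hα0 hα2 (by rw [← hsa]; exact hs) (by rw [← hca]; exact hc) with
      ⟨q1, q2⟩ | hexc
    · -- a ∈ [2πk + π, 2πk + 3π/2]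
      have m3 : JoinedIn PosS (a, b', c') (2*π*(k:ℝ) + 3*π/2, b', c') :=
        arc_move (lo := 2*π*(k:ℝ) + π) (hi := 2*π*(k:ℝ) + 3*π/2) (Or.inr rfl) (Or.inr rfl) hbsin hcsin
          ⟨by linarith, by linarith⟩ ⟨by linarith, le_refl _⟩
          (fun τ hτ => by obtain ⟨u1, u2⟩ := sgn_Q3 k τ hτ; constructor <;> linarith)
      have hcos0 : cos (2*π*(k:ℝ) + 3*π/2) = 0 := by
        have : 2*π*(k:ℝ) + 3*π/2 = 2*π*((k+1 : ℤ) : ℝ) - π/2 := by push_cast; ring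
        rw [this, cos_eval_neg_half]
      have hsinm1 : sin (2*π*(k:ℝ) + 3*π/2) = -1 := by
        have : 2*π*(k:ℝ) + 3*π/2 = 2*π*((k+1 : ℤ) : ℝ) - π/2 := by push_cast; ring
        rw [this, sin_eval_neg_half]
      have m4 : JoinedIn PosS (2*π*(k:ℝ) + 3*π/2, b', c')
          (2*π*(k:ℝ) + 3*π/2, b', 2*π*((k+1 : ℤ) : ℝ) + π/2) :=
        freeC hcos0 (by rw [hsinm1, hbsin]; norm_num) _ _
      have m5 : JoinedIn PosS (2*π*(k:ℝ) + 3*π/2, b', 2*π*((k+1 : ℤ) : ℝ) + π/2)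
          (2*π*((k+1 : ℤ) : ℝ), b', 2*π*((k+1 : ℤ) : ℝ) + π/2) :=
        arc_move (lo := 2*π*((k+1 : ℤ):ℝ) - π/2) (hi := 2*π*((k+1 : ℤ):ℝ)) (Or.inr rfl) (Or.inl rfl) hbsin (sin_eval_half (k+1))
          ⟨by push_cast; linarith, by push_cast; linarith⟩
          ⟨by push_cast; linarith, le_refl _⟩
          (fun τ hτ => by obtain ⟨u1, u2⟩ := sgn_Qm1 (k+1) τ hτ; constructor <;> linarith)
      exact m12.trans ((m3.trans (m4.trans m5)).trans (conn_Y (k+1) (k+1) rfl rfl _))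
    · -- a = 2πk - π/2
      have haval : a = 2*π*(k:ℝ) - π/2 := by linarith
      have m4 : JoinedIn PosS (a, b', c') (a, b', 2*π*(k:ℝ) + π/2) := by
        rw [haval]
        exact freeC (cos_eval_neg_half k) (by rw [sin_eval_neg_half k, hbsin]; norm_num) _ _
      have m5 : JoinedIn PosS (a, b', 2*π*(k:ℝ) + π/2) (2*π*(k:ℝ), b', 2*π*(k:ℝ) + π/2) :=
        arc_move (lo := 2*π*(k:ℝ) - π/2) (hi := 2*π*(k:ℝ)) (Or.inr rfl) (Or.inl rfl) hbsin (sin_eval_half k)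
          ⟨by linarith, by linarith⟩ ⟨by linarith, le_refl _⟩
          (fun τ hτ => by obtain ⟨u1, u2⟩ := sgn_Qm1 k τ hτ; constructor <;> linarith)
      exact m12.trans ((m4.trans m5).trans (conn_Y k k rfl rfl _))


lemma sinT_coe (m : ℕ) (a : ℝ) : sinT m (a : AddCircle (2 * π)) = sin (m * a) :=
  (sin_mul_periodic m).lift_coe a

lemma cosT_coe (m : ℕ) (a : ℝ) : cosT m (a : AddCircle (2 * π)) = cos (m * a) :=
  (cos_mul_periodic m).lift_coe a

lemma continuous_sinT (m : ℕ) : Continuous (sinT m) := by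
  show Continuous ((sin_mul_periodic m).lift)
  exact Continuous.quotient_liftOn' (by fun_prop) _

lemma continuous_cosT (m : ℕ) : Continuous (cosT m) := by
  show Continuous ((cos_mul_periodic m).lift)
  exact Continuous.quotient_liftOn' (by fun_prop) _

/-! ### Transfer to the torus -/

def Phi (u₁ u₂ u₃ v₁ v₂ v₃ : ℝ) (y : ℝ × ℝ × ℝ) : T3 :=
  ((((y.1 - v₁)/u₁ : ℝ) : AddCircle (2*π)), (((y.2.1 - v₂)/u₂ : ℝ) : AddCircle (2*π)),
    (((y.2.2 - v₃)/u₃ : ℝ) : AddCircle (2*π)))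

lemma torus_pc (H : T3 → ℝ) (u₁ u₂ u₃ v₁ v₂ v₃ : ℝ)
    (h1 : u₁ ≠ 0) (h2 : u₂ ≠ 0) (h3 : u₃ ≠ 0)
    (hH : ∀ a b c : ℝ, H ((a : AddCircle (2*π)), (b : AddCircle (2*π)), (c : AddCircle (2*π)))
      = f3 (u₁*a + v₁, u₂*b + v₂, u₃*c + v₃)) :
    IsPathConnected {p : T3 | 0 < H p} := by
  have hΦcont : Continuous (Phi u₁ u₂ u₃ v₁ v₂ v₃) := by
    unfold Phi
    apply Continuous.prodMk
    · exact continuous_quotient_mk'.comp (by fun_prop)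
    · apply Continuous.prodMk <;> exact continuous_quotient_mk'.comp (by fun_prop)
  have hΦmem : ∀ y ∈ PosS, Phi u₁ u₂ u₃ v₁ v₂ v₃ y ∈ {p : T3 | 0 < H p} := by
    intro y hy
    show 0 < H _
    simp only [Phi]
    rw [hH]
    have e1 : u₁ * ((y.1 - v₁)/u₁) + v₁ = y.1 := by field_simp; ring
    have e2 : u₂ * ((y.2.1 - v₂)/u₂) + v₂ = y.2.1 := by field_simp; ring
    have e3 : u₃ * ((y.2.2 - v₃)/u₃) + v₃ = y.2.2 := by field_simp; ring
    rw [e1, e2, e3]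
    exact hy
  have hP1 : ((π/2 : ℝ), (π/2 : ℝ), (π/2 : ℝ)) ∈ PosS := by
    show 0 < f3 _
    rw [f3_def, Real.sin_pi_div_two, Real.cos_pi_div_two]
    norm_num
  refine ⟨Phi u₁ u₂ u₃ v₁ v₂ v₃ (π/2, π/2, π/2), hΦmem _ hP1, ?_⟩
  intro p hp
  obtain ⟨a, ha⟩ := QuotientAddGroup.mk_surjective p.1
  obtain ⟨b, hb⟩ := QuotientAddGroup.mk_surjective p.2.1
  obtain ⟨c, hc⟩ := QuotientAddGroup.mk_surjective p.2.2
  have hp' : ((a : AddCircle (2*π)), (b : AddCircle (2*π)), (c : AddCircle (2*π))) = p := by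
    rw [ha, hb, hc]
  have hxPos : (u₁*a + v₁, u₂*b + v₂, u₃*c + v₃) ∈ PosS := by
    show 0 < f3 _
    rw [← hH, hp']
    exact hp
  have hkey := key_joined _ hxPos
  have himg : JoinedIn {p : T3 | 0 < H p}
      (Phi u₁ u₂ u₃ v₁ v₂ v₃ (u₁*a + v₁, u₂*b + v₂, u₃*c + v₃))
      (Phi u₁ u₂ u₃ v₁ v₂ v₃ (π/2, π/2, π/2)) := by
    obtain ⟨γ, hγ⟩ := hkey
    exact ⟨γ.map hΦcont, fun t => hΦmem _ (hγ t)⟩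
  have hΦx : Phi u₁ u₂ u₃ v₁ v₂ v₃ (u₁*a + v₁, u₂*b + v₂, u₃*c + v₃) = p := by
    rw [← hp']
    simp only [Phi]
    have e1 : ((u₁*a + v₁) - v₁)/u₁ = a := by field_simp; ring
    have e2 : ((u₂*b + v₂) - v₂)/u₂ = b := by field_simp; ring
    have e3 : ((u₃*c + v₃) - v₃)/u₃ = c := by field_simp; ring
    rw [e1, e2, e3]
  rw [hΦx] at himg
  exact himg.symm

lemma f3_flip (x y z : ℝ) : f3 (x + π, y, z) = -f3 (x, y, z) := by
  rw [f3_def, f3_def, Real.sin_add_pi, Real.cos_add_pi]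
  ring

lemma torus_pc_neg (H : T3 → ℝ) (u₁ u₂ u₃ v₁ v₂ v₃ : ℝ)
    (h1 : u₁ ≠ 0) (h2 : u₂ ≠ 0) (h3 : u₃ ≠ 0)
    (hH : ∀ a b c : ℝ, H ((a : AddCircle (2*π)), (b : AddCircle (2*π)), (c : AddCircle (2*π)))
      = f3 (u₁*a + v₁, u₂*b + v₂, u₃*c + v₃)) :
    IsPathConnected {p : T3 | H p < 0} := by
  have key := torus_pc (fun p => -H p) u₁ u₂ u₃ (v₁ + π) v₂ v₃ h1 h2 h3 (by
    intro a b c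
    show -H _ = _
    rw [hH a b c, show u₁*a + (v₁ + π) = (u₁*a + v₁) + π by ring, f3_flip])
  have hset : {p : T3 | 0 < (fun p => -H p) p} = {p : T3 | H p < 0} := by
    ext q; simp
  rwa [hset] at key

/-! ### Counting connected components -/

lemma count_two {Y : Type} [TopologicalSpace Y] (H : Y → ℝ) (hc : Continuous H)
    (hA : IsPathConnected {y : Y | 0 < H y}) (hB : IsPathConnected {y : Y | H y < 0}) :
    Nat.card (ConnectedComponents {y : Y // H y ≠ 0}) = 2 := by
  have hXsub : {y : Y | 0 < H y} ⊆ {y : Y | H y ≠ 0} := fun y hy => ne_of_gt hy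
  have hXsub' : {y : Y | H y < 0} ⊆ {y : Y | H y ≠ 0} := fun y hy => ne_of_lt hy
  set g : {y : Y // H y ≠ 0} → Bool := fun x => decide (0 < H x.1) with hg
  have hgc : Continuous g := by
    apply IsLocallyConstant.continuous
    rw [IsLocallyConstant.iff_isOpen_fiber]
    intro b
    cases b
    · have heq : {x : {y : Y // H y ≠ 0} | g x = false}
          = Subtype.val ⁻¹' {y : Y | H y < 0} := by
        ext x
        simp only [hg, mem_setOf_eq, decide_eq_false_iff_not, not_lt, mem_preimage]
        exact ⟨fun h => lt_of_le_of_ne h x.2, fun h => le_of_lt h⟩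
      show IsOpen {x | g x = false}
      rw [heq]
      exact (isOpen_lt hc continuous_const).preimage continuous_subtype_val
    · have heq : {x : {y : Y // H y ≠ 0} | g x = true}
          = Subtype.val ⁻¹' {y : Y | 0 < H y} := by
        ext x
        simp only [hg, mem_setOf_eq, decide_eq_true_eq, mem_preimage]
      show IsOpen {x | g x = true}
      rw [heq]
      exact (isOpen_lt continuous_const hc).preimage continuous_subtype_val
  have hbij : Function.Bijective hgc.connectedComponentsLift := by
    constructor
    · intro c1 c2 hcc
      obtain ⟨x1, rfl⟩ := ConnectedComponents.surjective_coe c1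
      obtain ⟨x2, rfl⟩ := ConnectedComponents.surjective_coe c2
      rw [hgc.connectedComponentsLift_apply_coe, hgc.connectedComponentsLift_apply_coe] at hcc
      have hjoin : Joined x1 x2 := by
        cases hb1 : g x1 with
        | true =>
          have hx1 : 0 < H x1.1 := by
            have := hb1; rw [hg] at this; simpa [decide_eq_true_eq] using this
          have hx2 : 0 < H x2.1 := by
            have := hcc; rw [hb1] at this
            rw [hg] at this; simpa [decide_eq_true_eq] using this.symm
          have hj := (hA.joinedIn _ hx1 _ hx2).mono hXsub
          exact hj.joined_subtype
        | false =>
          have hx1 : H x1.1 < 0 := by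
            have := hb1; rw [hg] at this
            simp only [decide_eq_false_iff_not, not_lt] at this
            exact lt_of_le_of_ne this x1.2
          have hx2 : H x2.1 < 0 := by
            have h2 := hcc; rw [hb1] at h2
            rw [hg] at h2
            have h2' := h2.symm
            simp only [decide_eq_false_iff_not, not_lt] at h2'
            exact lt_of_le_of_ne h2' x2.2
          have hj := (hB.joinedIn _ hx1 _ hx2).mono hXsub'
          exact hj.joined_subtype
      exact ConnectedComponents.coe_eq_coe'.mpr (pathComponent_subset_component _ hjoin.symm)
    · intro b
      cases b
      · obtain ⟨y, hy, -⟩ := hB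
        simp only [mem_setOf_eq] at hy
        refine ⟨((⟨y, ne_of_lt hy⟩ : {y : Y // H y ≠ 0}) : ConnectedComponents _), ?_⟩
        rw [hgc.connectedComponentsLift_apply_coe]
        simp [hg, not_lt.mpr (le_of_lt hy)]
      · obtain ⟨y, hy, -⟩ := hA
        simp only [mem_setOf_eq] at hy
        refine ⟨((⟨y, ne_of_gt hy⟩ : {y : Y // H y ≠ 0}) : ConnectedComponents _), ?_⟩
        rw [hgc.connectedComponentsLift_apply_coe]
        simp [hg, hy]
  rw [Nat.card_congr (Equiv.ofBijective _ hbij)]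
  simp [Nat.card_eq_fintype_card]


/-- (From Case 3 of the paper's eigenbasis of the flat 3-torus.)  For a positive
integer `m` and a sign `ε = ±1`, each of
`F(x₁,x₂,x₃) = sin(mx₁) sin(mx₂) + ε cos(mx₁) sin(mx₃)` and
`G(x₁,x₂,x₃) = cos(mx₁) cos(mx₂) + ε cos(mx₃) sin(mx₁)` on `T³`
has exactly two nodal domains. -/
theorem stmt10 (m : ℕ) (hm : 0 < m) (ε : ℝ) (hε : ε = 1 ∨ ε = -1) :
    Nat.card (ConnectedComponents
      {p : T3 // sinT m p.1 * sinT m p.2.1 + ε * (cosT m p.1 * sinT m p.2.2) ≠ 0}) = 2 ∧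
    Nat.card (ConnectedComponents
      {p : T3 // cosT m p.1 * cosT m p.2.1 + ε * (cosT m p.2.2 * sinT m p.1) ≠ 0}) = 2 := by
  have hm0 : ((m : ℝ)) ≠ 0 := Nat.cast_ne_zero.mpr hm.ne'
  have hε0 : ε ≠ 0 := by rcases hε with rfl | rfl <;> norm_num
  have hεm : ε * (m : ℝ) ≠ 0 := mul_ne_zero hε0 hm0
  constructor
  · set HF : T3 → ℝ := fun p => sinT m p.1 * sinT m p.2.1 + ε * (cosT m p.1 * sinT m p.2.2)
      with hHF
    have hcont : Continuous HF := by
      apply Continuous.add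
      · exact ((continuous_sinT m).comp continuous_fst).mul
          ((continuous_sinT m).comp (continuous_fst.comp continuous_snd))
      · exact continuous_const.mul (((continuous_cosT m).comp continuous_fst).mul
          ((continuous_sinT m).comp (continuous_snd.comp continuous_snd)))
    have hrep : ∀ a b c : ℝ,
        HF ((a : AddCircle (2*π)), (b : AddCircle (2*π)), (c : AddCircle (2*π)))
          = f3 ((m:ℝ)*a + 0, (m:ℝ)*b + 0, (ε*(m:ℝ))*c + 0) := by
      intro a b c
      rw [hHF]
      show sinT m _ * sinT m _ + ε * (cosT m _ * sinT m _) = _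
      rw [sinT_coe, sinT_coe, sinT_coe, cosT_coe, f3_def]
      simp only [add_zero]
      rcases hε with rfl | rfl
      · ring_nf
      · rw [show (-1*(m:ℝ))*c = -((m:ℝ)*c) by ring, Real.sin_neg]
        ring
    exact count_two HF hcont
      (torus_pc HF (m:ℝ) (m:ℝ) (ε*(m:ℝ)) 0 0 0 hm0 hm0 hεm hrep)
      (torus_pc_neg HF (m:ℝ) (m:ℝ) (ε*(m:ℝ)) 0 0 0 hm0 hm0 hεm hrep)
  · set HG : T3 → ℝ := fun p => cosT m p.1 * cosT m p.2.1 + ε * (cosT m p.2.2 * sinT m p.1)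
      with hHG
    have hcont : Continuous HG := by
      apply Continuous.add
      · exact ((continuous_cosT m).comp continuous_fst).mul
          ((continuous_cosT m).comp (continuous_fst.comp continuous_snd))
      · exact continuous_const.mul (((continuous_cosT m).comp (continuous_snd.comp
          continuous_snd)).mul ((continuous_sinT m).comp continuous_fst))
    have hrep : ∀ a b c : ℝ,
        HG ((a : AddCircle (2*π)), (b : AddCircle (2*π)), (c : AddCircle (2*π)))
          = f3 ((m:ℝ)*a + π/2, (m:ℝ)*b + π/2, (ε*(m:ℝ))*c + (-(ε*(π/2)))) := by
      intro a b c
      rw [hHG]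
      show cosT m _ * cosT m _ + ε * (cosT m _ * sinT m _) = _
      rw [cosT_coe, cosT_coe, cosT_coe, sinT_coe, f3_def]
      rw [Real.sin_add_pi_div_two, Real.sin_add_pi_div_two, Real.cos_add_pi_div_two]
      rcases hε with rfl | rfl
      · rw [show (1*(m:ℝ))*c + (-(1*(π/2))) = ((m:ℝ)*c) - π/2 by ring,
          Real.sin_sub_pi_div_two]
        ring
      · rw [show (-1*(m:ℝ))*c + (-(-1*(π/2))) = π/2 - ((m:ℝ)*c) by ring,
          Real.sin_pi_div_two_sub]
        ring
    exact count_two HG hcont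
      (torus_pc HG (m:ℝ) (m:ℝ) (ε*(m:ℝ)) (π/2) (π/2) (-(ε*(π/2))) hm0 hm0 hεm hrep)
      (torus_pc_neg HG (m:ℝ) (m:ℝ) (ε*(m:ℝ)) (π/2) (π/2) (-(ε*(π/2))) hm0 hm0 hεm hrep)
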